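/- Let n ≥ 1 be an integer. Then the Douglas–Rachford operator T satisfies (T T*)^n = (T* T)^n = (P_U P_V P_U)^n + (P_{U^⊥} P_{V^⊥} P_{U^⊥})^n = (P_V P_U P_V)^n + (P_{V^⊥} P_{U^⊥} P_{V^⊥})^n, and moreover P_U (T T*)^n = (P_U P_V)^n P_U = (T T*)^n P_U and P_V (T T*)^n = (P_V P_U)^n P_V = (T T*)^n P_V. -/

import Mathlib

noncomputable section

variable {X : Type*} [NormedAddCommGroup X] [InnerProductSpace ℝ X] [CompleteSpace X]

/-- The orthogonal projection onto a closed subspace `W`, as an operator on `X`. -/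
noncomputable def proj (W : Submodule ℝ X) [W.HasOrthogonalProjection] : X →L[ℝ] X :=
  W.subtypeL.comp W.orthogonalProjectionOnto

instance infHOP (U V : Submodule ℝ X) [CompleteSpace U] [CompleteSpace V] :
    (U ⊓ V).HasOrthogonalProjection := by
  have hU : IsClosed (U : Set X) := (completeSpace_coe_iff_isComplete.mp ‹_›).isClosed
  have hV : IsClosed (V : Set X) := (completeSpace_coe_iff_isComplete.mp ‹_›).isClosed
  have : CompleteSpace (U ⊓ V : Submodule ℝ X) := (hU.inter hV).completeSpace_coe
  infer_instance

/-- The fixed point set `Fix T = {x | T x = x}` of a continuous linear operator `T`,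
as a submodule of `X`. -/
noncomputable def fixedSpace (T : X →L[ℝ] X) : Submodule ℝ X := LinearMap.ker ((T - 1 : X →L[ℝ] X) : X →ₗ[ℝ] X)

instance fixedSpaceHOP (T : X →L[ℝ] X) : (fixedSpace T).HasOrthogonalProjection := by
  have h : IsClosed ((fixedSpace T : Submodule ℝ X) : Set X) := by
    have : ((fixedSpace T : Submodule ℝ X) : Set X) = {x | T x = x} := by
      ext x; simp [fixedSpace, LinearMap.mem_ker, sub_eq_zero]
    rw [this]
    exact isClosed_eq T.continuous continuous_id
  have : CompleteSpace (fixedSpace T) := h.completeSpace_coe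
  infer_instance

/-- The reflector `R_W = 2 P_W − Id` associated with `W`. -/
noncomputable def reflector (W : Submodule ℝ X) [W.HasOrthogonalProjection] : X →L[ℝ] X :=
  2 • proj W - 1

/-- The Douglas–Rachford operator `T = T_{V,U} = P_V (2 P_U − Id) + Id − P_U`.
(The first argument is `U`, the second is `V`.) -/
noncomputable def drOperator (U V : Submodule ℝ X) [U.HasOrthogonalProjection]
    [V.HasOrthogonalProjection] : X →L[ℝ] X :=
  proj V * (2 • proj U - 1) + 1 - proj U

/-- The cosine of the Friedrichs angle between `U` and `V`. -/
noncomputable def friedrichs (U V : Submodule ℝ X) : ℝ :=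
  sSup {c : ℝ | ∃ u v : X, u ∈ U ⊓ (U ⊓ V)ᗮ ∧ v ∈ V ⊓ (U ⊓ V)ᗮ ∧
    ‖u‖ ≤ 1 ∧ ‖v‖ ≤ 1 ∧ c = inner ℝ u v}

section DRAuxRing
variable {R : Type*} [Ring R] {p q : R}

lemma dr_aux_idem_mul (hp : p * p = p) : ∀ x : R, p * (p * x) = p * x := fun x => by
  rw [← mul_assoc, hp]

lemma dr_aux_tts (hp : p * p = p) (hq : q * q = q) :
    (q*p + (1-q)*(1-p)) * (p*q + (1-p)*(1-q)) = q*p*q + (1-q)*(1-p)*(1-q) := by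
  have hp1 := dr_aux_idem_mul hp
  have hq1 := dr_aux_idem_mul hq
  simp only [mul_add, add_mul, sub_mul, mul_sub, one_mul, mul_one, mul_assoc, hp1, hq1, hp, hq]
  abel

lemma dr_aux_sym (hp : p * p = p) (hq : q * q = q) :
    q*p*q + (1-q)*(1-p)*(1-q) = p*q*p + (1-p)*(1-q)*(1-p) := by
  have hp1 := dr_aux_idem_mul hp
  have hq1 := dr_aux_idem_mul hq
  simp only [mul_add, add_mul, sub_mul, mul_sub, one_mul, mul_one, mul_assoc, hp1, hq1, hp, hq]
  abel

lemma dr_aux_cross (hq : q * q = q) (x y : R) :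
    (q*x*q) * ((1-q)*y) = 0 := by
  have h0 : q * (1 - q) = 0 := by rw [mul_sub, mul_one, hq, sub_self]
  calc (q*x*q) * ((1-q)*y) = q*x*(q*(1-q))*y := by noncomm_ring
  _ = 0 := by rw [h0, mul_zero, zero_mul]

lemma dr_aux_cross' (hq : q * q = q) (x y : R) :
    ((1-q)*x*(1-q)) * (q*y) = 0 := by
  have h0 : (1-q) * q = 0 := by rw [sub_mul, one_mul, hq, sub_self]
  calc ((1-q)*x*(1-q)) * (q*y) = (1-q)*x*((1-q)*q)*y := by noncomm_ring
  _ = 0 := by rw [h0, mul_zero, zero_mul]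

lemma dr_aux_pow_mul_eq_zero {a b : R} (hab : a*b = 0) :
    ∀ m : ℕ, 1 ≤ m → a^m * b = 0 := by
  intro m hm
  obtain ⟨k, rfl⟩ : ∃ k, m = k + 1 := ⟨m-1, by omega⟩
  rw [pow_succ, mul_assoc, hab, mul_zero]

lemma dr_aux_mul_pow_eq_zero {a b : R} (hab : a*b = 0) :
    ∀ m : ℕ, 1 ≤ m → a * b^m = 0 := by
  intro m hm
  obtain ⟨k, rfl⟩ : ∃ k, m = k + 1 := ⟨m-1, by omega⟩
  rw [pow_succ', ← mul_assoc, hab, zero_mul]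

lemma dr_aux_pow_add {a b : R} (hab : a*b = 0) (hba : b*a = 0) :
    ∀ n : ℕ, 1 ≤ n → (a+b)^n = a^n + b^n := by
  intro n hn
  induction n with
  | zero => omega
  | succ m ih =>
    rcases Nat.lt_or_ge m 1 with h | h
    · interval_cases m; simp
    · rw [pow_succ, ih h, add_mul, mul_add, mul_add, dr_aux_pow_mul_eq_zero hab m h,
        dr_aux_pow_mul_eq_zero hba m h, ← pow_succ, ← pow_succ]
      abel

lemma dr_aux_pqp_pow (hp : p * p = p) : ∀ n : ℕ, 1 ≤ n → (p*q*p)^n = (p*q)^n * p := by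
  intro n hn
  induction n with
  | zero => omega
  | succ m ih =>
    rcases Nat.lt_or_ge m 1 with h | h
    · interval_cases m; simp
    · rw [pow_succ, ih h, pow_succ]
      have hp1 := dr_aux_idem_mul hp
      simp only [mul_assoc, hp1]

lemma dr_aux_absorb_left {a : R} (hpa : p * a = a) : ∀ n : ℕ, 1 ≤ n → p * a^n = a^n := by
  intro n hn
  obtain ⟨k, rfl⟩ : ∃ k, n = k + 1 := ⟨n-1, by omega⟩
  rw [pow_succ', ← mul_assoc, hpa]

end DRAuxRing

variable {X : Type*} [NormedAddCommGroup X] [InnerProductSpace ℝ X] [CompleteSpace X] in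
lemma dr_proj_idem (W : Submodule ℝ X) [CompleteSpace W] : proj W * proj W = proj W := by
  ext x
  exact Submodule.starProjection_mem_subspace_eq_self (K := W) (W.orthogonalProjectionOnto x)

variable {X : Type*} [NormedAddCommGroup X] [InnerProductSpace ℝ X] [CompleteSpace X] in
lemma dr_proj_orthogonal (W : Submodule ℝ X) [CompleteSpace W] : proj Wᗮ = 1 - proj W := by
  ext x
  have := Submodule.starProjection_add_starProjection_orthogonal (K := W) x
  simp only [proj, ContinuousLinearMap.sub_apply, ContinuousLinearMap.one_apply,
    ContinuousLinearMap.comp_apply, Submodule.subtypeL_apply]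
  exact eq_sub_of_add_eq (by rw [add_comm]; exact this)

variable {X : Type*} [NormedAddCommGroup X] [InnerProductSpace ℝ X] [CompleteSpace X] in
lemma dr_proj_sa (W : Submodule ℝ X) [CompleteSpace W] :
    ContinuousLinearMap.adjoint (proj W) = proj W :=
  (isSelfAdjoint_starProjection W).adjoint_eq

variable {X : Type*} [NormedAddCommGroup X] [InnerProductSpace ℝ X] [CompleteSpace X] in
lemma dr_eq_aux (U V : Submodule ℝ X) [CompleteSpace U] [CompleteSpace V] :
    drOperator U V = proj V * proj U + (1 - proj V) * (1 - proj U) := by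
  unfold drOperator; noncomm_ring

variable {X : Type*} [NormedAddCommGroup X] [InnerProductSpace ℝ X] [CompleteSpace X] in
lemma dr_adjoint_aux (U V : Submodule ℝ X) [CompleteSpace U] [CompleteSpace V] :
    ContinuousLinearMap.adjoint (drOperator U V) =
      proj U * proj V + (1 - proj U) * (1 - proj V) := by
  rw [dr_eq_aux, ← ContinuousLinearMap.star_eq_adjoint]
  simp only [star_add, star_mul, star_sub, star_one, ContinuousLinearMap.star_eq_adjoint,
    dr_proj_sa]

/-- for every integer `n ≥ 1`,
`(T T*)^n = (T* T)^n = (P_U P_V P_U)^n + (P_{U^⊥} P_{V^⊥} P_{U^⊥})^n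
= (P_V P_U P_V)^n + (P_{V^⊥} P_{U^⊥} P_{V^⊥})^n`, and moreover
`P_U (T T*)^n = (P_U P_V)^n P_U = (T T*)^n P_U` and
`P_V (T T*)^n = (P_V P_U)^n P_V = (T T*)^n P_V`. -/
theorem drOperator_mul_adjoint_pow
    (U V : Submodule ℝ X) [CompleteSpace U] [CompleteSpace V] (n : ℕ) (hn : 1 ≤ n) :
    (drOperator U V * ContinuousLinearMap.adjoint (drOperator U V)) ^ n =
      (ContinuousLinearMap.adjoint (drOperator U V) * drOperator U V) ^ n ∧
    (drOperator U V * ContinuousLinearMap.adjoint (drOperator U V)) ^ n =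
      (proj U * proj V * proj U) ^ n + (proj Uᗮ * proj Vᗮ * proj Uᗮ) ^ n ∧
    (drOperator U V * ContinuousLinearMap.adjoint (drOperator U V)) ^ n =
      (proj V * proj U * proj V) ^ n + (proj Vᗮ * proj Uᗮ * proj Vᗮ) ^ n ∧
    proj U * (drOperator U V * ContinuousLinearMap.adjoint (drOperator U V)) ^ n =
      (proj U * proj V) ^ n * proj U ∧
    (proj U * proj V) ^ n * proj U =
      (drOperator U V * ContinuousLinearMap.adjoint (drOperator U V)) ^ n * proj U ∧
    proj V * (drOperator U V * ContinuousLinearMap.adjoint (drOperator U V)) ^ n =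
      (proj V * proj U) ^ n * proj V ∧
    (proj V * proj U) ^ n * proj V =
      (drOperator U V * ContinuousLinearMap.adjoint (drOperator U V)) ^ n * proj V := by
  set p := proj U with hpdef
  set q := proj V with hqdef
  have hp : p * p = p := dr_proj_idem U
  have hq : q * q = q := dr_proj_idem V
  have hpo : proj Uᗮ = 1 - p := dr_proj_orthogonal U
  have hqo : proj Vᗮ = 1 - q := dr_proj_orthogonal V
  have hTT : drOperator U V * ContinuousLinearMap.adjoint (drOperator U V)
      = q*p*q + (1-q)*(1-p)*(1-q) := by
    rw [dr_adjoint_aux, dr_eq_aux]; exact dr_aux_tts hp hq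
  have hTsT : ContinuousLinearMap.adjoint (drOperator U V) * drOperator U V
      = p*q*p + (1-p)*(1-q)*(1-p) := by
    rw [dr_adjoint_aux, dr_eq_aux]; exact dr_aux_tts hq hp
  have hEq : drOperator U V * ContinuousLinearMap.adjoint (drOperator U V)
      = ContinuousLinearMap.adjoint (drOperator U V) * drOperator U V := by
    rw [hTT, hTsT]; exact dr_aux_sym hp hq
  -- cross-term zero lemmas
  have habp : (p*q*p) * ((1-p)*(1-q)*(1-p)) = 0 := by
    rw [mul_assoc (1-p)]; exact dr_aux_cross hp _ _
  have hbap : ((1-p)*(1-q)*(1-p)) * (p*q*p) = 0 := by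
    rw [mul_assoc p]; exact dr_aux_cross' hp _ _
  have habq : (q*p*q) * ((1-q)*(1-p)*(1-q)) = 0 := by
    rw [mul_assoc (1-q)]; exact dr_aux_cross hq _ _
  have hbaq : ((1-q)*(1-p)*(1-q)) * (q*p*q) = 0 := by
    rw [mul_assoc q]; exact dr_aux_cross' hq _ _
  have hsplitp : (drOperator U V * ContinuousLinearMap.adjoint (drOperator U V)) ^ n
      = (p*q*p)^n + ((1-p)*(1-q)*(1-p))^n := by
    rw [hEq, hTsT]; exact dr_aux_pow_add habp hbap n hn
  have hsplitq : (drOperator U V * ContinuousLinearMap.adjoint (drOperator U V)) ^ n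
      = (q*p*q)^n + ((1-q)*(1-p)*(1-q))^n := by
    rw [hTT]; exact dr_aux_pow_add habq hbaq n hn
  have hp0 : p * (1 - p) = 0 := by rw [mul_sub, mul_one, hp, sub_self]
  have hq0 : q * (1 - q) = 0 := by rw [mul_sub, mul_one, hq, sub_self]
  have h0p : (1 - p) * p = 0 := by rw [sub_mul, one_mul, hp, sub_self]
  have h0q : (1 - q) * q = 0 := by rw [sub_mul, one_mul, hq, sub_self]
  -- P_U * (TT*)^n = (P_U P_V)^n P_U
  have hPabsorb : p * (p*q*p) = p*q*p := by
    rw [← mul_assoc, ← mul_assoc, hp]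
  have hQabsorb : q * (q*p*q) = q*p*q := by
    rw [← mul_assoc, ← mul_assoc, hq]
  have hpb0 : p * ((1-p)*(1-q)*(1-p)) = 0 := by
    rw [mul_assoc (1-p), ← mul_assoc p, hp0, zero_mul]
  have hqb0 : q * ((1-q)*(1-p)*(1-q)) = 0 := by
    rw [mul_assoc (1-q), ← mul_assoc q, hq0, zero_mul]
  have hbp0 : ((1-p)*(1-q)*(1-p)) * p = 0 := by
    rw [mul_assoc, mul_assoc, h0p, mul_zero, mul_zero]
  have hbq0 : ((1-q)*(1-p)*(1-q)) * q = 0 := by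
    rw [mul_assoc, mul_assoc, h0q, mul_zero, mul_zero]
  have goal4 : p * (drOperator U V * ContinuousLinearMap.adjoint (drOperator U V)) ^ n
      = (p*q)^n * p := by
    rw [hsplitp, mul_add, dr_aux_absorb_left hPabsorb n hn,
      dr_aux_mul_pow_eq_zero hpb0 n hn, add_zero, dr_aux_pqp_pow hp n hn]
  have goal5 : (drOperator U V * ContinuousLinearMap.adjoint (drOperator U V)) ^ n * p
      = (p*q)^n * p := by
    rw [hsplitp, add_mul, dr_aux_pow_mul_eq_zero hbp0 n hn, add_zero,
      dr_aux_pqp_pow hp n hn, mul_assoc, hp]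
  have goal6 : q * (drOperator U V * ContinuousLinearMap.adjoint (drOperator U V)) ^ n
      = (q*p)^n * q := by
    rw [hsplitq, mul_add, dr_aux_absorb_left hQabsorb n hn,
      dr_aux_mul_pow_eq_zero hqb0 n hn, add_zero, dr_aux_pqp_pow hq n hn]
  have goal7 : (drOperator U V * ContinuousLinearMap.adjoint (drOperator U V)) ^ n * q
      = (q*p)^n * q := by
    rw [hsplitq, add_mul, dr_aux_pow_mul_eq_zero hbq0 n hn, add_zero,
      dr_aux_pqp_pow hq n hn, mul_assoc, hq]
  refine ⟨by rw [hEq], ?_, ?_, goal4, ?_, goal6, ?_⟩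
  · rw [hpo, hqo]; exact hsplitp
  · rw [hpo, hqo]; exact hsplitq
  · rw [goal5]
  · rw [goal7]
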